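/- Let M be positive semidefinite with Φ_c(M) nonempty and λ(M) = min_{φ∈Λ(M)} φ'Mφ > 0. Let x be an absolutely continuous solution of x'(t) = -Mγ(t) with γ(t) a generalized sign vector of x(t). Then there exists a finite time T ≤ ‖x(0)‖₁/λ(M) such that x(T) ∈ Φ(M), i.e. some generalized sign vector φ of x(T) satisfies Mφ = 0. -/

import Mathlib

open Matrix MeasureTheory

def IsGenSign {r : ℕ} (x q : Fin r → ℝ) : Prop :=
  ∀ k, (0 < x k → q k = 1) ∧ (x k < 0 → q k = -1) ∧ (x k = 0 → |q k| ≤ 1)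

open Set Filter Metric intervalIntegral
open scoped Topology

lemma IsGenSign.abs_le {r : ℕ} {x q : Fin r → ℝ} (h : IsGenSign x q) (k : Fin r) :
    |q k| ≤ 1 := by
  rcases lt_trichotomy (x k) 0 with hx | hx | hx
  · rw [(h k).2.1 hx]; norm_num
  · exact (h k).2.2 hx
  · rw [(h k).1 hx]; norm_num

lemma IsGenSign.mul_eq_abs {r : ℕ} {x q : Fin r → ℝ} (h : IsGenSign x q) (k : Fin r) :
    q k * x k = |x k| := by
  rcases lt_trichotomy (x k) 0 with hx | hx | hx
  · rw [(h k).2.1 hx, abs_of_neg hx]; ring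
  · rw [hx, mul_zero, abs_zero]
  · rw [(h k).1 hx, abs_of_pos hx, one_mul]

lemma sum_mul_le_card_norm {r : ℕ} {q : Fin r → ℝ} (hq : ∀ k, |q k| ≤ 1)
    (v : Fin r → ℝ) : ∑ k, q k * v k ≤ (r : ℝ) * ‖v‖ := by
  calc ∑ k, q k * v k ≤ ∑ k, |q k * v k| := by
        exact Finset.sum_le_sum fun k _ => le_abs_self _
    _ ≤ ∑ k : Fin r, ‖v‖ := by
        refine Finset.sum_le_sum fun k _ => ?_
        rw [abs_mul]
        calc |q k| * |v k| ≤ 1 * |v k| :=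
              mul_le_mul_of_nonneg_right (hq k) (abs_nonneg _)
          _ = |v k| := one_mul _
          _ ≤ ‖v‖ := norm_le_pi_norm v k
    _ = (r : ℝ) * ‖v‖ := by simp [Finset.sum_const, Finset.card_univ, mul_comm]

set_option maxHeartbeats 1000000 in
/-- Let `M` be PSD with `Φc(M)` nonempty and `lam = min_{φ ∈ Λ(M)} φ'Mφ > 0`
(`IsLeast` encodes both the minimum property and nonemptiness of `Λ(M)`, hence of
`Φc(M)`). For an absolutely continuous solution of `x' = -Mγ` with `γ(t)` a
generalized sign vector of `x(t)`, there is a finite time `T ≤ ‖x(0)‖₁ / lam`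
with `x(T) ∈ Φ(M)`, i.e. some generalized sign vector `φ` of `x(T)` has `Mφ = 0`. -/
theorem stmt_11 {r : ℕ} (M : Matrix (Fin r) (Fin r) ℝ) (hM : M.PosSemidef)
    (lam : ℝ)
    (hlam : IsLeast {v : ℝ | ∃ φ q : Fin r → ℝ,
      (∀ ψ, IsGenSign q ψ → M.mulVec ψ ≠ 0) ∧ IsGenSign q φ ∧
      v = ∑ k, φ k * M.mulVec φ k} lam)
    (hlampos : 0 < lam)
    (x γ : ℝ → Fin r → ℝ)
    (hγ : ∀ t, IsGenSign (x t) (γ t))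
    (hInt : ∀ t : ℝ, IntervalIntegrable (fun s => -(M.mulVec (γ s))) volume 0 t)
    (hAC : ∀ t ≥ (0:ℝ), x t = x 0 + ∫ s in (0:ℝ)..t, -(M.mulVec (γ s))) :
    ∃ T : ℝ, 0 ≤ T ∧ T ≤ (∑ k, |x 0 k|) / lam ∧
      ∃ φ : Fin r → ℝ, IsGenSign (x T) φ ∧ M.mulVec φ = 0 := by
  classical
  by_contra hcon
  push_neg at hcon
  -- notation
  set a : ℝ → Fin r → ℝ := fun y => M.mulVec (γ y) with ha
  set f : ℝ → ℝ := fun t => ∑ k, |x t k| with hfdef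
  set Tm : ℝ := (∑ k, |x 0 k|) / lam with hTm
  have hf0 : ∀ t, 0 ≤ f t := fun t => Finset.sum_nonneg fun k _ => abs_nonneg _
  have hTm0 : 0 ≤ Tm := div_nonneg (hf0 0) hlampos.le
  -- quadratic form lower bound while no admissible sign vector annihilates M
  have hquad : ∀ t, 0 ≤ t → t ≤ Tm → lam ≤ ∑ k, γ t k * a t k := by
    intro t h0 h1
    exact hlam.2 ⟨γ t, x t, hcon t h0 h1, hγ t, rfl⟩
  -- integrability
  have hInt0 : ∀ t, IntervalIntegrable a volume 0 t := by
    intro t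
    have h := (hInt t).neg
    have he : (-(fun s => -(M.mulVec (γ s)))) = a := by funext y; simp [ha]
    rwa [he] at h
  have hIntst : ∀ s t, IntervalIntegrable a volume s t :=
    fun s t => (hInt0 s).symm.trans (hInt0 t)
  -- uniform bound on a
  set C : ℝ := ∑ k, ∑ j, |M k j| with hC
  have hC0 : 0 ≤ C := Finset.sum_nonneg fun k _ => Finset.sum_nonneg fun j _ => abs_nonneg _
  have hanorm : ∀ y, ‖a y‖ ≤ C := by
    intro y
    rw [pi_norm_le_iff_of_nonneg hC0]
    intro k
    have h1 : ‖a y k‖ = |∑ j, M k j * γ y j| := by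
      simp [ha, Matrix.mulVec, dotProduct, Real.norm_eq_abs]
    rw [h1]
    calc |∑ j, M k j * γ y j| ≤ ∑ j, |M k j * γ y j| := Finset.abs_sum_le_sum_abs _ _
      _ ≤ ∑ j, |M k j| := by
          refine Finset.sum_le_sum fun j _ => ?_
          rw [abs_mul]
          calc |M k j| * |γ y j| ≤ |M k j| * 1 :=
                mul_le_mul_of_nonneg_left ((hγ y).abs_le j) (abs_nonneg _)
            _ = |M k j| := mul_one _
      _ ≤ C := Finset.single_le_sum (f := fun k => ∑ j, |M k j|)
            (fun k _ => Finset.sum_nonneg fun j _ => abs_nonneg _) (Finset.mem_univ k)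
  -- difference of x as an interval integral
  have hxdiff : ∀ s t, 0 ≤ s → s ≤ t → x t - x s = ∫ y in s..t, -(a y) := by
    intro s t h0s hst
    rw [hAC t (h0s.trans hst), hAC s h0s]
    have := integral_interval_sub_left (hInt t) (hInt s)
    rw [← this]
    abel
  -- the norm of x t - x s is controlled
  have hxnorm : ∀ s t, 0 ≤ s → s ≤ t → ‖x t - x s‖ ≤ C * (t - s) := by
    intro s t h0s hst
    rw [hxdiff s t h0s hst]
    calc ‖∫ y in s..t, -(a y)‖ ≤ ∫ y in s..t, ‖-(a y)‖ :=
          norm_integral_le_integral_norm hst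
      _ = ∫ y in s..t, ‖a y‖ := by simp
      _ ≤ ∫ _y in s..t, C := by
          apply integral_mono_on hst ((hIntst s t).norm) intervalIntegrable_const
          intro y _; exact hanorm y
      _ = C * (t - s) := by
          rw [intervalIntegral.integral_const]; simp [smul_eq_mul, mul_comm]
  -- Lipschitz bound for f
  have hlip : ∀ s t, 0 ≤ s → s ≤ t → |f t - f s| ≤ ((r : ℝ) * C) * (t - s) := by
    intro s t h0s hst
    have h1 : |f t - f s| ≤ (r : ℝ) * ‖x t - x s‖ := by
      have h2 : f t - f s = ∑ k, (|x t k| - |x s k|) := by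
        rw [hfdef]; rw [Finset.sum_sub_distrib]
      rw [h2]
      calc |∑ k, (|x t k| - |x s k|)| ≤ ∑ k, |(|x t k| - |x s k|)| :=
            Finset.abs_sum_le_sum_abs _ _
        _ ≤ ∑ k : Fin r, ‖x t - x s‖ := by
            refine Finset.sum_le_sum fun k _ => ?_
            calc |(|x t k| - |x s k|)| ≤ |x t k - x s k| := abs_abs_sub_abs_le_abs_sub _ _
              _ = |(x t - x s) k| := by simp
              _ ≤ ‖x t - x s‖ := by simpa using norm_le_pi_norm (x t - x s) k
        _ = (r : ℝ) * ‖x t - x s‖ := by simp [Finset.sum_const, Finset.card_univ, mul_comm]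
    calc |f t - f s| ≤ (r : ℝ) * ‖x t - x s‖ := h1
      _ ≤ (r : ℝ) * (C * (t - s)) := by
          exact mul_le_mul_of_nonneg_left (hxnorm s t h0s hst) (Nat.cast_nonneg r)
      _ = ((r : ℝ) * C) * (t - s) := by ring
  have hfcont : ContinuousOn f (Ici (0:ℝ)) := by
    intro t ht
    rw [Metric.continuousWithinAt_iff]
    intro ε hε
    refine ⟨ε / ((r : ℝ) * C + 1), by positivity, fun {s} hs hd => ?_⟩
    have hb : |f s - f t| ≤ ((r : ℝ) * C) * |s - t| := by
      rcases le_total s t with h | h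
      · have := hlip s t hs h
        rw [abs_sub_comm] at this
        calc |f s - f t| ≤ ((r:ℝ)*C) * (t - s) := this
          _ = ((r:ℝ)*C) * |s - t| := by rw [abs_sub_comm, abs_of_nonneg (by linarith)]
      · have := hlip t s ht h
        calc |f s - f t| ≤ ((r:ℝ)*C) * (s - t) := this
          _ = ((r:ℝ)*C) * |s - t| := by rw [abs_of_nonneg (by linarith)]
    have hrC : (0:ℝ) ≤ (r : ℝ) * C := mul_nonneg (Nat.cast_nonneg r) hC0
    rw [Real.dist_eq] at hd ⊢
    calc |f s - f t| ≤ ((r : ℝ) * C) * |s - t| := hb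
      _ < ((r : ℝ) * C + 1) * (ε / ((r : ℝ) * C + 1)) := by
          have h1 : ((r : ℝ) * C) * |s - t| ≤ ((r : ℝ) * C + 1) * |s - t| :=
            mul_le_mul_of_nonneg_right (by linarith) (abs_nonneg _)
          have h2 : ((r : ℝ) * C + 1) * |s - t| < ((r : ℝ) * C + 1) * (ε / ((r : ℝ) * C + 1)) :=
            mul_lt_mul_of_pos_left hd (by linarith)
          linarith
      _ = ε := by field_simp
  -- key decay estimate
  have hstep : ∀ s t, 0 ≤ s → s ≤ t → t ≤ Tm →
      f t - f s ≤ (r : ℝ) * (∫ y in s..t, ‖a y - a t‖) - (t - s) * lam := by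
    intro s t h0s hst htT
    have hv : x t - x s = ∫ y in s..t, -(a y) := hxdiff s t h0s hst
    -- split the integral
    have hsplit : (∫ y in s..t, -(a y)) =
        (∫ y in s..t, (a t - a y)) - (t - s) • a t := by
      have h1 : (∫ y in s..t, (a t - a y)) =
          (∫ _y in s..t, a t) - ∫ y in s..t, a y :=
        integral_sub intervalIntegrable_const (hIntst s t)
      have h2 : (∫ y in s..t, -(a y)) = -∫ y in s..t, a y :=
        intervalIntegral.integral_neg
      rw [h1, h2, intervalIntegral.integral_const]
      abel
    set w : Fin r → ℝ := ∫ y in s..t, (a t - a y) with hw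
    -- step 1 : f t - f s ≤ ∑ γ t k * (x t k - x s k)
    have hfs : ∑ k, γ t k * x s k ≤ f s := by
      rw [hfdef]
      refine Finset.sum_le_sum fun k _ => ?_
      calc γ t k * x s k ≤ |γ t k * x s k| := le_abs_self _
        _ = |γ t k| * |x s k| := abs_mul _ _
        _ ≤ 1 * |x s k| := mul_le_mul_of_nonneg_right ((hγ t).abs_le k) (abs_nonneg _)
        _ = |x s k| := one_mul _
    have hft : f t = ∑ k, γ t k * x t k := by
      rw [hfdef]
      exact Finset.sum_congr rfl fun k _ => ((hγ t).mul_eq_abs k).symm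
    have hdq : f t - f s ≤ ∑ k, γ t k * ((x t - x s) k) := by
      have : ∑ k, γ t k * ((x t - x s) k)
          = (∑ k, γ t k * x t k) - ∑ k, γ t k * x s k := by
        rw [← Finset.sum_sub_distrib]
        exact Finset.sum_congr rfl fun k _ => by simp [Pi.sub_apply]; ring
      rw [this, ← hft]
      linarith
    -- step 2 : rewrite via w
    have hdq2 : ∑ k, γ t k * ((x t - x s) k)
        = (∑ k, γ t k * w k) - (t - s) * ∑ k, γ t k * a t k := by
      rw [hv, hsplit]
      rw [Finset.mul_sum]
      rw [← Finset.sum_sub_distrib]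
      refine Finset.sum_congr rfl fun k _ => ?_
      simp [Pi.sub_apply, Pi.smul_apply, smul_eq_mul]
      ring
    -- step 3 : bound ∑ γ w
    have hwb : ∑ k, γ t k * w k ≤ (r : ℝ) * (∫ y in s..t, ‖a y - a t‖) := by
      calc ∑ k, γ t k * w k ≤ (r : ℝ) * ‖w‖ :=
            sum_mul_le_card_norm (fun k => (hγ t).abs_le k) w
        _ ≤ (r : ℝ) * (∫ y in s..t, ‖a y - a t‖) := by
            refine mul_le_mul_of_nonneg_left ?_ (Nat.cast_nonneg r)
            calc ‖w‖ ≤ ∫ y in s..t, ‖a t - a y‖ := norm_integral_le_integral_norm hst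
              _ = ∫ y in s..t, ‖a y - a t‖ := by
                  refine integral_congr fun y _ => ?_
                  exact norm_sub_rev _ _
    have hq := hquad t (h0s.trans hst) htT
    have hts : (0:ℝ) ≤ t - s := by linarith
    calc f t - f s ≤ ∑ k, γ t k * ((x t - x s) k) := hdq
      _ = (∑ k, γ t k * w k) - (t - s) * ∑ k, γ t k * a t k := hdq2
      _ ≤ (r : ℝ) * (∫ y in s..t, ‖a y - a t‖) - (t - s) * lam := by
          have := mul_le_mul_of_nonneg_left hq hts
          linarith
  -- locally integrable
  have hloc : LocallyIntegrable a volume := by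
    rw [locallyIntegrable_iff]
    intro k hk
    obtain ⟨R, hRpos, hR⟩ := hk.isBounded.subset_closedBall_lt 0 0
    have h1 : IntegrableOn a (Icc (-R) R) volume :=
      (intervalIntegrable_iff_integrableOn_Icc_of_le (by linarith)).mp (hIntst (-R) R)
    refine h1.mono_set ?_
    refine hR.trans ?_
    rw [Real.closedBall_eq_Icc]
    norm_num
  -- Lebesgue differentiation: a.e. point is a left Lebesgue point of `a`
  have hae : ∀ᵐ t : ℝ, Filter.Tendsto
      (fun s => ⨍ y in closedBall ((s+t)/2) ((t-s)/2), ‖a y - a t‖)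
      (𝓝[<] t) (𝓝 0) := by
    filter_upwards [IsUnifLocDoublingMeasure.ae_tendsto_average_norm_sub volume hloc 1]
      with t ht
    refine ht (fun s => (s+t)/2) (fun s => (t-s)/2) ?_ ?_
    · rw [tendsto_nhdsWithin_iff]
      constructor
      · have hc : Filter.Tendsto (fun s : ℝ => (t - s)/2) (𝓝 t) (𝓝 ((t - t)/2)) :=
          (tendsto_const_nhds.sub tendsto_id).div_const 2
        have h0 : ((t : ℝ) - t)/2 = 0 := by ring
        rw [h0] at hc
        exact hc.mono_left nhdsWithin_le_nhds
      · filter_upwards [self_mem_nhdsWithin] with s hs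
        have hst : s < t := hs
        exact mem_Ioi.mpr (by linarith)
    · filter_upwards [self_mem_nhdsWithin] with s hs
      have hst : s < t := hs
      rw [mem_closedBall, Real.dist_eq]
      have h1 : |t - (s + t)/2| = (t - s)/2 := by
        rw [abs_of_nonneg (by linarith)]; ring
      rw [h1, one_mul]
  -- reflected version
  have hae' : ∀ᵐ u : ℝ, Filter.Tendsto
      (fun s => ⨍ y in closedBall ((s+(Tm-u))/2) (((Tm-u)-s)/2), ‖a y - a (Tm-u)‖)
      (𝓝[<] (Tm-u)) (𝓝 0) :=
    (MeasureTheory.Measure.measurePreserving_sub_left volume Tm).quasiMeasurePreserving.ae hae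
  have hrC : (0:ℝ) ≤ (r : ℝ) * C := mul_nonneg (Nat.cast_nonneg r) hC0
  -- the main epsilon estimate
  have main : ∀ ε : ℝ, 0 < ε → f Tm ≤ f 0 - lam * Tm + ((r:ℝ)*C + lam) * ε := by
    intro ε hε
    set N : Set ℝ := {u | ¬ Filter.Tendsto
      (fun s => ⨍ y in closedBall ((s+(Tm-u))/2) (((Tm-u)-s)/2), ‖a y - a (Tm-u)‖)
      (𝓝[<] (Tm-u)) (𝓝 0)} with hN
    have hNnull : volume N = 0 := by
      rw [hN]; exact ae_iff.mp hae'
    obtain ⟨U, hNU, hUopen, hUvol⟩ :=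
      Set.exists_isOpen_lt_of_lt N (ENNReal.ofReal ε)
        (by rw [hNnull]; exact ENNReal.ofReal_pos.mpr hε)
    set m : ℝ → ℝ := fun u => (volume (U ∩ Ioc 0 u)).toReal with hm
    have hmfin : ∀ u, volume (U ∩ Ioc 0 u) ≠ ⊤ :=
      fun u => ne_top_of_le_ne_top (ne_top_of_lt hUvol) (measure_mono inter_subset_left)
    have hm0 : m 0 = 0 := by simp [hm]
    have hm_mono : Monotone m := by
      intro u v huv
      exact (ENNReal.toReal_le_toReal (hmfin u) (hmfin v)).mpr
        (measure_mono (inter_subset_inter_right _ (Ioc_subset_Ioc_right huv)))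
    have hm_lip : ∀ u v : ℝ, u ≤ v → m v - m u ≤ v - u := by
      intro u v huv
      have hsub : U ∩ Ioc 0 v ⊆ (U ∩ Ioc 0 u) ∪ Ioc u v := by
        rintro w ⟨hwU, hw0, hwv⟩
        rcases le_or_gt w u with h | h
        · exact Or.inl ⟨hwU, hw0, h⟩
        · exact Or.inr ⟨h, hwv⟩
      have h1 : volume (U ∩ Ioc 0 v) ≤ volume (U ∩ Ioc 0 u) + ENNReal.ofReal (v - u) := by
        calc volume (U ∩ Ioc 0 v) ≤ volume ((U ∩ Ioc 0 u) ∪ Ioc u v) := measure_mono hsub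
          _ ≤ volume (U ∩ Ioc 0 u) + volume (Ioc u v) := measure_union_le _ _
          _ = volume (U ∩ Ioc 0 u) + ENNReal.ofReal (v - u) := by rw [Real.volume_Ioc]
      have hne : volume (U ∩ Ioc 0 u) + ENNReal.ofReal (v - u) ≠ ⊤ :=
        ENNReal.add_ne_top.mpr ⟨hmfin u, ENNReal.ofReal_ne_top⟩
      have h2 := ENNReal.toReal_mono hne h1
      rw [ENNReal.toReal_add (hmfin u) ENNReal.ofReal_ne_top,
        ENNReal.toReal_ofReal (by linarith : (0:ℝ) ≤ v - u)] at h2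
      simp only [hm] at h2 ⊢
      linarith
    have hm_gain : ∀ u z : ℝ, 0 ≤ u → u < z → Ioc u z ⊆ U → z - u ≤ m z - m u := by
      intro u z h0u huz hsub
      have hdisj : Disjoint (U ∩ Ioc 0 u) (Ioc u z) := by
        refine Set.disjoint_left.mpr ?_
        rintro w ⟨_, _, hwu⟩ ⟨huw, _⟩
        exact absurd hwu (not_le.mpr huw)
      have hsup : (U ∩ Ioc 0 u) ∪ Ioc u z ⊆ U ∩ Ioc 0 z := by
        rintro w (⟨hwU, hw0, hwu⟩ | hw)
        · exact ⟨hwU, hw0, hwu.trans huz.le⟩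
        · exact ⟨hsub hw, lt_of_le_of_lt h0u hw.1, hw.2⟩
      have h1 : volume (U ∩ Ioc 0 u) + ENNReal.ofReal (z - u) ≤ volume (U ∩ Ioc 0 z) := by
        rw [← Real.volume_Ioc (a := u) (b := z), ← measure_union hdisj measurableSet_Ioc]
        exact measure_mono hsup
      have h2 := ENNReal.toReal_mono (hmfin z) h1
      rw [ENNReal.toReal_add (hmfin u) ENNReal.ofReal_ne_top,
        ENNReal.toReal_ofReal (by linarith : (0:ℝ) ≤ z - u)] at h2
      simp only [hm] at h2 ⊢
      linarith
    have hm_cont : Continuous m := by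
      have hlipm : LipschitzWith 1 m := by
        apply LipschitzWith.of_dist_le_mul
        intro u v
        rw [Real.dist_eq, Real.dist_eq, NNReal.coe_one, one_mul]
        rcases le_total u v with h | h
        · rw [abs_sub_comm (m u) (m v), abs_sub_comm u v]
          rw [abs_of_nonneg (sub_nonneg.mpr (hm_mono h)), abs_of_nonneg (sub_nonneg.mpr h)]
          exact hm_lip u v h
        · rw [abs_of_nonneg (sub_nonneg.mpr (hm_mono h)), abs_of_nonneg (sub_nonneg.mpr h)]
          exact hm_lip v u h
      exact hlipm.continuous
    set K : ℝ := (r : ℝ) * C with hK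
    have hK0 : 0 ≤ K := hrC
    set F0 : ℝ → ℝ := fun u => -f (Tm - u) - (K + lam) * m u with hF0
    set Bd : ℝ → ℝ := fun u => -f Tm + (-lam) * u with hBd
    have hF0cont : ContinuousOn F0 (Icc 0 Tm) := by
      have h1 : ContinuousOn (fun u => f (Tm - u)) (Icc 0 Tm) :=
        hfcont.comp ((continuous_const.sub continuous_id).continuousOn)
          (fun u hu => mem_Ici.mpr (sub_nonneg.mpr hu.2))
      exact h1.neg.sub ((continuous_const.mul hm_cont).continuousOn)
    have hBdcont : ContinuousOn Bd (Icc 0 Tm) :=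
      (continuous_const.add (continuous_const.mul continuous_id)).continuousOn
    have hBd' : ∀ u ∈ Ico 0 Tm, HasDerivWithinAt Bd (-lam) (Ici u) u := by
      intro u _
      have h1 : HasDerivWithinAt Bd (0 + (-lam) * 1) (Ici u) u := by
        rw [hBd]
        exact (hasDerivWithinAt_const u _ (-f Tm)).add
          ((hasDerivWithinAt_id u (Ici u)).const_mul (-lam))
      simpa using h1
    have hstart : F0 0 ≤ Bd 0 := by
      simp [hF0, hBd, hm0]
    have hbound : ∀ u ∈ Ico 0 Tm, ∀ ρ : ℝ, -lam < ρ →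
        ∃ᶠ z in 𝓝[>] u, slope F0 u z < ρ := by
      intro u hu ρ hρ
      have h0u : 0 ≤ u := hu.1
      have huT : u < Tm := hu.2
      apply Filter.Eventually.frequently
      by_cases hUu : u ∈ U
      · -- inside the open cover: use the measure gain of m
        obtain ⟨δ, hδ0, hδ⟩ := Metric.isOpen_iff.mp hUopen u hUu
        have hc : u < min (u + δ/2) Tm := lt_min (by linarith) huT
        filter_upwards [Ioo_mem_nhdsGT_of_mem
          (⟨le_refl u, hc⟩ : u ∈ Ico u (min (u + δ/2) Tm))] with z hz
        have huz : u < z := hz.1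
        have hzT : z ≤ Tm := le_of_lt (lt_of_lt_of_le hz.2 (min_le_right _ _))
        have hzδ : z < u + δ/2 := lt_of_lt_of_le hz.2 (min_le_left _ _)
        have hsubU : Ioc u z ⊆ U := by
          intro w hw
          apply hδ
          rw [mem_ball, Real.dist_eq, abs_of_pos (sub_pos.mpr hw.1)]
          have h2 := hw.2
          linarith
        have hgz : f (Tm - u) - f (Tm - z) ≤ K * (z - u) := by
          have h2 := hlip (Tm - z) (Tm - u) (by linarith) (by linarith)
          have h3 : (Tm - u) - (Tm - z) = z - u := by ring
          rw [h3] at h2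
          calc f (Tm - u) - f (Tm - z) ≤ |f (Tm - u) - f (Tm - z)| := le_abs_self _
            _ ≤ K * (z - u) := h2
        have hmgain := hm_gain u z h0u huz hsubU
        have hF0diff : F0 z - F0 u ≤ -lam * (z - u) := by
          have h1 : F0 z - F0 u
              = (f (Tm - u) - f (Tm - z)) - (K + lam) * (m z - m u) := by
            simp only [hF0]; ring
          rw [h1]
          have h2 : (K + lam) * (z - u) ≤ (K + lam) * (m z - m u) :=
            mul_le_mul_of_nonneg_left hmgain (by linarith)
          nlinarith
        rw [slope_def_field, div_lt_iff₀ (by linarith : (0:ℝ) < z - u)]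
        nlinarith
      · -- a good (Lebesgue) point
        have hgood : Filter.Tendsto
            (fun s => ⨍ y in closedBall ((s+(Tm-u))/2) (((Tm-u)-s)/2), ‖a y - a (Tm-u)‖)
            (𝓝[<] (Tm-u)) (𝓝 0) := by
          by_contra hbad
          exact hUu (hNU hbad)
        set t := Tm - u with ht
        have h0t : 0 < t := by rw [ht]; linarith
        have hmapz : Filter.Tendsto (fun z : ℝ => Tm - z) (𝓝[>] u) (𝓝[<] t) := by
          rw [tendsto_nhdsWithin_iff]
          constructor
          · have h1 : Filter.Tendsto (fun z : ℝ => Tm - z) (𝓝 u) (𝓝 (Tm - u)) :=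
              tendsto_const_nhds.sub tendsto_id
            exact h1.mono_left nhdsWithin_le_nhds
          · filter_upwards [self_mem_nhdsWithin] with z hz
            have huz : u < z := hz
            rw [mem_Iio, ht]
            linarith
        have hAvg : Filter.Tendsto
            (fun z => ⨍ y in closedBall (((Tm - z)+t)/2) ((t-(Tm - z))/2), ‖a y - a t‖)
            (𝓝[>] u) (𝓝 0) := hgood.comp hmapz
        have hpos : (0:ℝ) < (ρ + lam) / ((r:ℝ) + 1) := by
          have : (0:ℝ) < ρ + lam := by linarith
          positivity
        filter_upwards [hAvg.eventually_lt_const hpos,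
          Ioo_mem_nhdsGT_of_mem (⟨le_refl u, huT⟩ : u ∈ Ico u Tm)] with z hzavg hz
        have huz : u < z := hz.1
        have hzT : z < Tm := hz.2
        set s := Tm - z with hs
        have h0s : 0 ≤ s := by rw [hs]; linarith
        have hst : s < t := by rw [hs, ht]; linarith
        have hts : t - s = z - u := by rw [hs, ht]; ring
        set Aval := ⨍ y in closedBall ((s+t)/2) ((t-s)/2), ‖a y - a t‖ with hAval
        have hIea : (∫ y in s..t, ‖a y - a t‖) = (t - s) * Aval := by
          rw [hAval, setAverage_eq, Real.closedBall_eq_Icc]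
          have h1 : (s+t)/2 - (t-s)/2 = s := by ring
          have h2 : (s+t)/2 + (t-s)/2 = t := by ring
          rw [h1, h2, measureReal_def, Real.volume_Icc,
            ENNReal.toReal_ofReal (by linarith : (0:ℝ) ≤ t - s),
            integral_Icc_eq_integral_Ioc,
            intervalIntegral.integral_of_le hst.le, smul_eq_mul, ← mul_assoc,
            mul_inv_cancel₀ (by linarith : t - s ≠ 0), one_mul]
        have htT : t ≤ Tm := by rw [ht]; linarith
        have hstep' := hstep s t h0s hst.le htT
        rw [hIea] at hstep'
        have hF0slope : F0 z - F0 u ≤ f t - f s := by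
          have h1 : F0 z - F0 u = (f (Tm - u) - f (Tm - z)) - (K+lam) * (m z - m u) := by
            simp only [hF0]; ring
          have h2 : 0 ≤ (K + lam) * (m z - m u) :=
            mul_nonneg (by linarith) (sub_nonneg.mpr (hm_mono huz.le))
          rw [h1, ← ht, ← hs]
          linarith
        have hrAvg : (r:ℝ) * Aval ≤ (r:ℝ) * ((ρ+lam)/((r:ℝ)+1)) :=
          mul_le_mul_of_nonneg_left hzavg.le (Nat.cast_nonneg r)
        have h3 : (r:ℝ) * ((ρ+lam)/((r:ℝ)+1)) < ρ + lam := by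
          have h4 : (r:ℝ)/((r:ℝ)+1) < 1 := by
            rw [div_lt_one (by positivity)]; linarith
          calc (r:ℝ) * ((ρ+lam)/((r:ℝ)+1)) = ((r:ℝ)/((r:ℝ)+1)) * (ρ+lam) := by ring
            _ < 1 * (ρ+lam) := mul_lt_mul_of_pos_right h4 (by linarith)
            _ = ρ + lam := one_mul _
        have h5 : (r:ℝ) * Aval < ρ + lam := lt_of_le_of_lt hrAvg h3
        have hts0 : (0:ℝ) < t - s := by linarith
        have h6 : (t - s) * ((r:ℝ) * Aval) < (t - s) * (ρ + lam) :=
          mul_lt_mul_of_pos_left h5 hts0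
        have h7 : (r:ℝ) * ((t-s) * Aval) = (t - s) * ((r:ℝ) * Aval) := by ring
        rw [slope_def_field, div_lt_iff₀ (by linarith : (0:ℝ) < z - u)]
        rw [h7] at hstep'
        -- F0 z - F0 u ≤ f t - f s ≤ (t-s)*(r*Aval) - (t-s)*lam < (t-s)*ρ = ρ*(z-u)
        have h8 : (t - s) * (ρ + lam) - (t - s) * lam = ρ * (z - u) := by
          rw [← hts]; ring
        linarith
    have fence := image_le_of_liminf_slope_right_le_deriv_boundary
      hF0cont hstart hBdcont hBd' hbound (right_mem_Icc.mpr hTm0)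
    -- unfold the conclusion at Tm
    have hmB : m Tm ≤ ε := by
      have h1 : volume (U ∩ Ioc 0 Tm) ≤ ENNReal.ofReal ε :=
        le_trans (measure_mono inter_subset_left) hUvol.le
      calc m Tm ≤ (ENNReal.ofReal ε).toReal := ENNReal.toReal_mono ENNReal.ofReal_ne_top h1
        _ = ε := ENNReal.toReal_ofReal hε.le
    have hfence' : -f (Tm - Tm) - (K + lam) * m Tm ≤ -f Tm + (-lam) * Tm := fence
    rw [sub_self] at hfence'
    have h9 : (K + lam) * m Tm ≤ (K + lam) * ε :=
      mul_le_mul_of_nonneg_left hmB (by linarith)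
    rw [hK] at h9 hfence'
    have g1 : f Tm ≤ f 0 + (↑r * C + lam) * m Tm - lam * Tm := by linarith
    have g2 : f 0 + (↑r * C + lam) * m Tm - lam * Tm ≤
        f 0 - lam * Tm + (↑r * C + lam) * ε := by linarith
    show f Tm ≤ f 0 - lam * Tm + ((r:ℝ) * C + lam) * ε
    linarith
  -- conclude f Tm = 0
  have h2 : f Tm ≤ f 0 - lam * Tm := by
    apply le_of_forall_pos_le_add
    intro ε hε
    have hden : (0:ℝ) < (r:ℝ)*C + lam + 1 := by linarith
    have h3 := main (ε / ((r:ℝ)*C + lam + 1)) (by positivity)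
    have h4 : ((r:ℝ)*C + lam) * (ε / ((r:ℝ)*C + lam + 1)) ≤ ε := by
      rw [mul_div_assoc', div_le_iff₀ hden]
      nlinarith
    linarith
  have hfeq : f 0 = ∑ k, |x 0 k| := by rw [hfdef]
  have hTmmul : lam * Tm = f 0 := by
    rw [hTm, hfeq]
    field_simp
  have hfT0 : f Tm = 0 := le_antisymm (by linarith) (hf0 Tm)
  have hxTm : ∀ k, x Tm k = 0 := by
    intro k
    have h1 : ∑ k, |x Tm k| = 0 := by rw [← hfT0, hfdef]
    have h2 := (Finset.sum_eq_zero_iff_of_nonneg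
      (fun k _ => abs_nonneg (x Tm k))).mp h1 k (Finset.mem_univ k)
    exact abs_eq_zero.mp h2
  have hgs : IsGenSign (x Tm) (fun _ => 0) := by
    intro k
    refine ⟨fun h => absurd h ?_, fun h => absurd h ?_, fun _ => by norm_num⟩
    · rw [hxTm k]; exact lt_irrefl 0
    · rw [hxTm k]; exact lt_irrefl 0
  exact hcon Tm hTm0 le_rfl (fun _ => 0) hgs (by
    have : (fun _ => (0:ℝ) : Fin r → ℝ) = 0 := rfl
    rw [this, Matrix.mulVec_zero])
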